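/- Let q be an odd prime power, 𝔖 ⊆ GL(2,q) the stated union of conjugacy classes, and χ₁, χ₂: 𝔽_q^× → ℂ^× two distinct group homomorphisms. Define the induced character I[χ₁,χ₂](g) = (1/|B(q)|)·∑_{u ∈ GL(2,q), u⁻¹gu ∈ B(q)} χ₁((u⁻¹gu)₁₁)·χ₂((u⁻¹gu)₂₂) and set θ = (1/(q+1))·∑_{g ∈ 𝔖} I[χ₁,χ₂](g). Then θ = q(χ₁(−1) + χ₂(−1)) + (q−1)² if χ₂ = χ₁⁻¹, and θ = q(χ₁(−1) + χ₂(−1)) otherwise. Moreover θ ≡ 2 (mod 4) if χ₁(−1)χ₂(−1) = 1, and θ ≡ 0 (mod 4) if χ₁(−1)χ₂(−1) = −1. -/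

import Mathlib

open scoped Classical

/-- Perfect state transfer from `a` to `b` at time `τ` for the continuous-time quantum
walk with Hamiltonian given by the complex matrix `A`. -/
noncomputable def pst {V : Type*} [Fintype V] [DecidableEq V]
    (A : Matrix V V ℂ) (a b : V) (τ : ℝ) : Prop :=
  ∃ γ : ℂ, ‖γ‖ = 1 ∧
    (NormedSpace.exp ((-(τ : ℂ) * Complex.I) • A)).mulVec (Pi.single a 1 : V → ℂ) =
      γ • (Pi.single b 1 : V → ℂ)

/-- The adjacency matrix of the Cayley graph `Cay(G, S)`. -/
noncomputable def cayleyAdj {G : Type*} [Group G] (S : Set G) : Matrix G G ℂ :=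
  fun g h => if h * g⁻¹ ∈ S then 1 else 0

/-- The Cayley graph `Cay(G, S)` as a simple graph (for inverse-closed `S ⊆ G \ {1}`,
`g` and `h` are adjacent iff `h * g⁻¹ ∈ S`). -/
def cayleyGraph {G : Type*} [Group G] (S : Set G) : SimpleGraph G :=
  SimpleGraph.fromRel (fun g h => h * g⁻¹ ∈ S)

/-- The representative `c₂(x) = [[x,1],[0,x]]`. -/
def c2 {F : Type*} [Field F] (x : Fˣ) : Matrix (Fin 2) (Fin 2) F :=
  !![(x : F), 1; 0, (x : F)]

/-- The representative `c₃(1,-1) = diag(1,-1)`. -/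
def c3 (F : Type*) [Field F] : Matrix (Fin 2) (Fin 2) F := !![1, 0; 0, -1]

/-- The representative `c₄(z) = [[x_z, Δ y_z],[y_z, x_z]]` for `z = x + y√Δ`. -/
def c4 {F : Type*} [Field F] (Δ x y : F) : Matrix (Fin 2) (Fin 2) F := !![x, Δ * y; y, x]

/-- The connection set `𝔖 ⊆ GL(2,q)`: all elements conjugate to `c₃(1,-1)`, to some
`c₂(x)` with `x ∈ 𝔽_q^×`, or to some `c₄(z)` with `z ∈ 𝔽_{q²}^× \ 𝔽_q^×` and
`z^{q+1} ∈ {1} ∪ N` (`N` the non-squares of `𝔽_q^×`). Here `z = x + y·√Δ` with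
`x, y ∈ 𝔽_q`, where `sq = √Δ ∈ 𝔽_{q²}` is a fixed square root of the non-square `Δ`. -/
def glConn (q : ℕ) {F K : Type*} [Field F] [Field K] [Algebra F K] (Δ : F) (sq : K) :
    Set ((Matrix (Fin 2) (Fin 2) F)ˣ) :=
  {g | (∃ u : (Matrix (Fin 2) (Fin 2) F)ˣ,
          (u : Matrix (Fin 2) (Fin 2) F) * c3 F * ((u⁻¹ : (Matrix (Fin 2) (Fin 2) F)ˣ) :
            Matrix (Fin 2) (Fin 2) F) = (g : Matrix (Fin 2) (Fin 2) F)) ∨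
       (∃ x : Fˣ, ∃ u : (Matrix (Fin 2) (Fin 2) F)ˣ,
          (u : Matrix (Fin 2) (Fin 2) F) * c2 x * ((u⁻¹ : (Matrix (Fin 2) (Fin 2) F)ˣ) :
            Matrix (Fin 2) (Fin 2) F) = (g : Matrix (Fin 2) (Fin 2) F)) ∨
       (∃ z : K, ∃ x y : F,
          z = algebraMap F K x + algebraMap F K y * sq ∧
          z ∉ Set.range (algebraMap F K) ∧
          (z ^ (q + 1) = 1 ∨
            ∃ nn : F, (¬ ∃ w : F, w ^ 2 = nn) ∧ z ^ (q + 1) = algebraMap F K nn) ∧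
          ∃ u : (Matrix (Fin 2) (Fin 2) F)ˣ,
            (u : Matrix (Fin 2) (Fin 2) F) * c4 Δ x y * ((u⁻¹ : (Matrix (Fin 2) (Fin 2) F)ˣ) :
              Matrix (Fin 2) (Fin 2) F) = (g : Matrix (Fin 2) (Fin 2) F))}

/-- Extension by zero of a character of `Fˣ` to `F`. -/
noncomputable def extHom {F : Type*} [Field F] (χ : Fˣ →* ℂˣ) : F → ℂ :=
  fun a => if h : a = 0 then 0 else χ (Units.mk0 a h)

/-- The principal series character `I[χ₁,χ₂]` of `GL(2,q)`, via the Frobenius formula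
for the character induced from the linear character `[[a,b],[0,d]] ↦ χ₁(a)χ₂(d)` of the
Borel subgroup `B(q)` of upper triangular matrices. -/
noncomputable def indPS {F : Type*} [Field F] [Fintype F] (χ₁ χ₂ : Fˣ →* ℂˣ)
    (g : (Matrix (Fin 2) (Fin 2) F)ˣ) : ℂ :=
  (({u : (Matrix (Fin 2) (Fin 2) F)ˣ |
      (u : Matrix (Fin 2) (Fin 2) F) 1 0 = 0}.toFinset.card : ℂ))⁻¹ *
    ∑ u : (Matrix (Fin 2) (Fin 2) F)ˣ,
      if ((u⁻¹ * g * u : (Matrix (Fin 2) (Fin 2) F)ˣ) : Matrix (Fin 2) (Fin 2) F) 1 0 = 0 then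
        extHom χ₁ (((u⁻¹ * g * u : (Matrix (Fin 2) (Fin 2) F)ˣ) :
            Matrix (Fin 2) (Fin 2) F) 0 0) *
        extHom χ₂ (((u⁻¹ * g * u : (Matrix (Fin 2) (Fin 2) F)ˣ) :
            Matrix (Fin 2) (Fin 2) F) 1 1)
      else 0

variable {F : Type} [Field F]

/-- Upper triangular unit. -/
noncomputable def mkUT (a d : Fˣ) (b : F) : (Matrix (Fin 2) (Fin 2) F)ˣ where
  val := !![(a : F), b; 0, (d : F)]
  inv := !![((a⁻¹ : Fˣ) : F), -((a⁻¹ : Fˣ) : F) * b * ((d⁻¹ : Fˣ) : F); 0, ((d⁻¹ : Fˣ) : F)]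
  val_inv := by
    ext i j
    fin_cases i <;> fin_cases j <;>
      simp [Matrix.mul_fin_two, Matrix.one_fin_two] <;> field_simp <;> ring
  inv_val := by
    ext i j
    fin_cases i <;> fin_cases j <;>
      simp [Matrix.mul_fin_two, Matrix.one_fin_two] <;> field_simp <;> ring

@[simp] lemma mkUT_coe (a d : Fˣ) (b : F) :
    ((mkUT a d b : (Matrix (Fin 2) (Fin 2) F)ˣ) : Matrix (Fin 2) (Fin 2) F)
      = !![(a : F), b; 0, (d : F)] := rfl

@[simp] lemma mkUT_00 (a d : Fˣ) (b : F) :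
    ((mkUT a d b : (Matrix (Fin 2) (Fin 2) F)ˣ) : Matrix (Fin 2) (Fin 2) F) 0 0 = a := rfl
@[simp] lemma mkUT_01 (a d : Fˣ) (b : F) :
    ((mkUT a d b : (Matrix (Fin 2) (Fin 2) F)ˣ) : Matrix (Fin 2) (Fin 2) F) 0 1 = b := rfl
@[simp] lemma mkUT_10 (a d : Fˣ) (b : F) :
    ((mkUT a d b : (Matrix (Fin 2) (Fin 2) F)ˣ) : Matrix (Fin 2) (Fin 2) F) 1 0 = 0 := rfl
@[simp] lemma mkUT_11 (a d : Fˣ) (b : F) :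
    ((mkUT a d b : (Matrix (Fin 2) (Fin 2) F)ˣ) : Matrix (Fin 2) (Fin 2) F) 1 1 = d := rfl

lemma ut_entries {u : (Matrix (Fin 2) (Fin 2) F)ˣ}
    (h : ((u : Matrix (Fin 2) (Fin 2) F)) 1 0 = 0) :
    ((u : Matrix (Fin 2) (Fin 2) F) 0 0 ≠ 0) ∧ ((u : Matrix (Fin 2) (Fin 2) F) 1 1 ≠ 0) := by
  have hdet : IsUnit (u : Matrix (Fin 2) (Fin 2) F).det :=
    (Matrix.isUnit_iff_isUnit_det _).1 u.isUnit
  rw [Matrix.det_fin_two, h, mul_zero, sub_zero] at hdet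
  have := hdet.ne_zero
  exact ⟨fun h0 => this (by rw [h0, zero_mul]), fun h0 => this (by rw [h0, mul_zero])⟩

noncomputable def utEquiv : {u : (Matrix (Fin 2) (Fin 2) F)ˣ //
    ((u : Matrix (Fin 2) (Fin 2) F)) 1 0 = 0} ≃ Fˣ × Fˣ × F where
  toFun u := ⟨Units.mk0 _ (ut_entries u.2).1, Units.mk0 _ (ut_entries u.2).2,
    (u.1 : Matrix (Fin 2) (Fin 2) F) 0 1⟩
  invFun p := ⟨mkUT p.1 p.2.1 p.2.2, rfl⟩
  left_inv u := by
    refine Subtype.ext (Units.ext ?_)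
    rw [mkUT_coe]
    conv_rhs => rw [Matrix.eta_fin_two ((u.1 : (Matrix (Fin 2) (Fin 2) F)ˣ) :
      Matrix (Fin 2) (Fin 2) F)]
    rw [u.2]
    simp
  right_inv p := by
    ext <;> simp

lemma card_ut [Fintype F] :
    ({u : (Matrix (Fin 2) (Fin 2) F)ˣ | ((u : Matrix (Fin 2) (Fin 2) F)) 1 0 = 0}).toFinset.card
      = (Fintype.card F - 1) * ((Fintype.card F - 1) * Fintype.card F) := by
  rw [Set.toFinset_card]
  have := Fintype.card_congr (utEquiv (F := F))
  simp only [Fintype.card_prod, Fintype.card_units] at this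
  convert this using 2 <;> rfl

lemma card_gl [Fintype F] :
    Fintype.card (Matrix (Fin 2) (Fin 2) F)ˣ =
      (Fintype.card F ^ 2 - 1) * (Fintype.card F ^ 2 - Fintype.card F) := by
  have := Matrix.card_GL_field (𝔽 := F) (n := 2)
  rw [Nat.card_eq_fintype_card] at this
  rw [show Fintype.card (Matrix (Fin 2) (Fin 2) F)ˣ = Fintype.card (GL (Fin 2) F) from rfl, this]
  simp [Fin.prod_univ_two]

lemma card_gl_eq [Fintype F] (q : ℕ) (hF : Fintype.card F = q) (hq : 1 ≤ q) :
    Fintype.card (Matrix (Fin 2) (Fin 2) F)ˣ =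
      (q + 1) * ((q - 1) * ((q - 1) * q)) := by
  rw [card_gl, hF]
  have h1 : q ^ 2 - 1 = (q + 1) * (q - 1) := by
    cases q with | zero => omega | succ n => simp [Nat.succ_sub_one]; ring_nf; omega
  have h2 : q ^ 2 - q = q * (q - 1) := by
    cases q with | zero => omega | succ n => simp [Nat.succ_sub_one]; ring_nf; omega
  rw [h1, h2]; ring

section Conj

variable {u g : (Matrix (Fin 2) (Fin 2) F)ˣ} {c : Matrix (Fin 2) (Fin 2) F}

lemma conj_trace (h : (u : Matrix (Fin 2) (Fin 2) F) * c *
    ((u⁻¹ : (Matrix (Fin 2) (Fin 2) F)ˣ) : Matrix (Fin 2) (Fin 2) F)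
      = (g : Matrix (Fin 2) (Fin 2) F)) :
    (g : Matrix (Fin 2) (Fin 2) F).trace = c.trace := by
  rw [← h, Matrix.trace_mul_comm, ← mul_assoc]
  norm_cast
  rw [inv_mul_cancel]
  simp

lemma conj_det_sub (h : (u : Matrix (Fin 2) (Fin 2) F) * c *
    ((u⁻¹ : (Matrix (Fin 2) (Fin 2) F)ˣ) : Matrix (Fin 2) (Fin 2) F)
      = (g : Matrix (Fin 2) (Fin 2) F)) (a : F) :
    ((g : Matrix (Fin 2) (Fin 2) F) - a • 1).det = (c - a • 1).det := by
  have key : (u : Matrix (Fin 2) (Fin 2) F) * (c - a • 1) *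
      ((u⁻¹ : (Matrix (Fin 2) (Fin 2) F)ˣ) : Matrix (Fin 2) (Fin 2) F)
        = (g : Matrix (Fin 2) (Fin 2) F) - a • 1 := by
    rw [mul_sub, sub_mul, h, mul_smul_comm, smul_mul_assoc, mul_one, Units.mul_inv]
  have hdet : ((u : Matrix (Fin 2) (Fin 2) F)).det *
      (((u⁻¹ : (Matrix (Fin 2) (Fin 2) F)ˣ) : Matrix (Fin 2) (Fin 2) F)).det = 1 := by
    rw [← Matrix.det_mul, Units.mul_inv, Matrix.det_one]
  rw [← key, Matrix.det_mul, Matrix.det_mul]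
  calc ((u : Matrix (Fin 2) (Fin 2) F)).det * (c - a • 1).det *
      (((u⁻¹ : (Matrix (Fin 2) (Fin 2) F)ˣ) : Matrix (Fin 2) (Fin 2) F)).det
      = (c - a • 1).det * (((u : Matrix (Fin 2) (Fin 2) F)).det *
        (((u⁻¹ : (Matrix (Fin 2) (Fin 2) F)ˣ) : Matrix (Fin 2) (Fin 2) F)).det) := by ring
    _ = (c - a • 1).det := by rw [hdet, mul_one]

lemma conj_det (h : (u : Matrix (Fin 2) (Fin 2) F) * c *
    ((u⁻¹ : (Matrix (Fin 2) (Fin 2) F)ˣ) : Matrix (Fin 2) (Fin 2) F)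
      = (g : Matrix (Fin 2) (Fin 2) F)) :
    (g : Matrix (Fin 2) (Fin 2) F).det = c.det := by
  have := conj_det_sub h 0
  simpa using this

end Conj

lemma conj_back {u g : (Matrix (Fin 2) (Fin 2) F)ˣ} {c : Matrix (Fin 2) (Fin 2) F}
    (h : (u : Matrix (Fin 2) (Fin 2) F) * c *
      ((u⁻¹ : (Matrix (Fin 2) (Fin 2) F)ˣ) : Matrix (Fin 2) (Fin 2) F)
        = (g : Matrix (Fin 2) (Fin 2) F)) :
    c = ((u⁻¹ : (Matrix (Fin 2) (Fin 2) F)ˣ) : Matrix (Fin 2) (Fin 2) F) *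
      (g : Matrix (Fin 2) (Fin 2) F) * (u : Matrix (Fin 2) (Fin 2) F) := by
  rw [← h]
  simp only [← mul_assoc]
  rw [Units.inv_mul, one_mul, mul_assoc, Units.inv_mul, mul_one]

@[simp] lemma mkUT_inv_coe (a d : Fˣ) (b : F) :
    (((mkUT a d b)⁻¹ : (Matrix (Fin 2) (Fin 2) F)ˣ) : Matrix (Fin 2) (Fin 2) F)
      = !![((a⁻¹ : Fˣ) : F), -((a⁻¹ : Fˣ) : F) * b * ((d⁻¹ : Fˣ) : F); 0, ((d⁻¹ : Fˣ) : F)] := rfl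

lemma mem_glConn_iff_ut {K : Type} [Field K] [Algebra F K] (q : ℕ) (Δ : F)
    (hΔ : ¬ ∃ m : F, m ^ 2 = Δ) (sq : K) (htwo : (2 : F) ≠ 0)
    (g : (Matrix (Fin 2) (Fin 2) F)ˣ) (hg : (g : Matrix (Fin 2) (Fin 2) F) 1 0 = 0) :
    g ∈ glConn q Δ sq ↔
      ((g : Matrix (Fin 2) (Fin 2) F) 0 0 = 1 ∧ (g : Matrix (Fin 2) (Fin 2) F) 1 1 = -1) ∨
      ((g : Matrix (Fin 2) (Fin 2) F) 0 0 = -1 ∧ (g : Matrix (Fin 2) (Fin 2) F) 1 1 = 1) ∨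
      ((g : Matrix (Fin 2) (Fin 2) F) 0 0 = (g : Matrix (Fin 2) (Fin 2) F) 1 1 ∧
        (g : Matrix (Fin 2) (Fin 2) F) 0 1 ≠ 0) := by
  set A : F := (g : Matrix (Fin 2) (Fin 2) F) 0 0 with hA
  set B : F := (g : Matrix (Fin 2) (Fin 2) F) 0 1 with hB
  set D : F := (g : Matrix (Fin 2) (Fin 2) F) 1 1 with hD
  have hgeta : (g : Matrix (Fin 2) (Fin 2) F) = !![A, B; 0, D] := by
    rw [Matrix.eta_fin_two ((g : Matrix (Fin 2) (Fin 2) F)), hg]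
  constructor
  · rintro (⟨u, hu⟩ | ⟨x, u, hu⟩ | ⟨z, x, y, hz, hnr, -, u, hu⟩)
    · -- conjugate to c3
      have hdet := conj_det hu
      have hd1 := conj_det_sub hu 1
      rw [hgeta] at hdet hd1
      rw [c3] at hdet hd1
      simp [Matrix.det_fin_two] at hdet hd1
      rcases hd1 with h1 | h1
      · have ha : A = 1 := sub_eq_zero.1 h1
        left
        refine ⟨ha, ?_⟩
        rw [ha, one_mul] at hdet
        exact hdet
      · have hd : D = 1 := sub_eq_zero.1 h1
        right; left
        refine ⟨?_, hd⟩
        rw [hd, mul_one] at hdet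
        exact hdet
    · -- conjugate to c2 x
      have htr := conj_trace hu
      have hdx := conj_det_sub hu (x : F)
      rw [hgeta] at htr hdx
      rw [c2] at htr hdx
      simp [Matrix.trace_fin_two, Matrix.det_fin_two] at htr hdx
      have hAD : A = D := by
        rcases hdx with h1 | h1
        · have ha : A = (x : F) := sub_eq_zero.1 h1
          have : D = (x : F) := by linear_combination htr - ha
          rw [ha, this]
        · have hd : D = (x : F) := sub_eq_zero.1 h1
          have : A = (x : F) := by linear_combination htr - hd
          rw [hd, this]
      refine Or.inr (Or.inr ⟨hAD, ?_⟩)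
      intro hB0
      have hsc : (g : Matrix (Fin 2) (Fin 2) F) = (A : F) • (1 : Matrix (Fin 2) (Fin 2) F) := by
        rw [hgeta, hB0, ← hAD]
        ext i j
        fin_cases i <;> fin_cases j <;> simp [Matrix.one_fin_two]
      have hc2 := conj_back hu
      rw [hsc, mul_smul_comm, smul_mul_assoc, mul_one, Units.inv_mul] at hc2
      have := congrFun (congrFun hc2 0) 1
      simp [c2, Matrix.one_apply] at this
    · -- conjugate to c4 : impossible
      exfalso
      have hy : y ≠ 0 := by
        intro h0
        exact hnr ⟨x, by rw [hz, h0, map_zero, zero_mul, add_zero]⟩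
      have htr := conj_trace hu
      have hdt := conj_det hu
      rw [hgeta] at htr hdt
      rw [c4] at htr hdt
      simp [Matrix.trace_fin_two, Matrix.det_fin_two] at htr hdt
      apply hΔ
      refine ⟨(A - D) / (2 * y), ?_⟩
      have h2y : (2 * y) ≠ 0 := mul_ne_zero htwo hy
      rw [div_pow, div_eq_iff (pow_ne_zero 2 h2y)]
      linear_combination (A + D + 2 * x) * htr - 4 * hdt
  · rintro (⟨h1, h2⟩ | ⟨h1, h2⟩ | ⟨h1, h2⟩)
    · left
      refine ⟨mkUT 1 1 (-B / 2), ?_⟩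
      rw [hgeta, h1, h2, mkUT_coe, mkUT_inv_coe, c3]
      ext i j
      fin_cases i <;> fin_cases j <;>
        simp [Matrix.mul_fin_two] <;> field_simp <;> ring
    · left
      refine ⟨⟨!![B / 2, 1; 1, 0], !![0, 1; 1, -B / 2], ?_, ?_⟩, ?_⟩
      · ext i j
        fin_cases i <;> fin_cases j <;>
          simp [Matrix.mul_fin_two, Matrix.one_fin_two] <;> ring
      · ext i j
        fin_cases i <;> fin_cases j <;>
          simp [Matrix.mul_fin_two, Matrix.one_fin_two] <;> ring
      · show !![B / 2, 1; 1, 0] * c3 F * !![0, 1; 1, -B / 2] = _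
        rw [hgeta, h1, h2, c3]
        ext i j
        fin_cases i <;> fin_cases j <;>
          simp [Matrix.mul_fin_two] <;> field_simp <;> ring
    · right; left
      have hA0 : A ≠ 0 := (ut_entries hg).1
      refine ⟨Units.mk0 A hA0, mkUT (Units.mk0 B h2) 1 0, ?_⟩
      rw [hgeta, ← h1, mkUT_coe, mkUT_inv_coe, c2]
      ext i j
      fin_cases i <;> fin_cases j <;>
        simp [Matrix.mul_fin_two] <;> field_simp <;> ring

lemma conj_conj {g : (Matrix (Fin 2) (Fin 2) F)ˣ} {c : Matrix (Fin 2) (Fin 2) F}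
    (v u : (Matrix (Fin 2) (Fin 2) F)ˣ)
    (h : (u : Matrix (Fin 2) (Fin 2) F) * c *
      ((u⁻¹ : (Matrix (Fin 2) (Fin 2) F)ˣ) : Matrix (Fin 2) (Fin 2) F)
        = (g : Matrix (Fin 2) (Fin 2) F)) :
    ((v * u : (Matrix (Fin 2) (Fin 2) F)ˣ) : Matrix (Fin 2) (Fin 2) F) * c *
      (((v * u)⁻¹ : (Matrix (Fin 2) (Fin 2) F)ˣ) : Matrix (Fin 2) (Fin 2) F)
        = ((v * g * v⁻¹ : (Matrix (Fin 2) (Fin 2) F)ˣ) : Matrix (Fin 2) (Fin 2) F) := by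
  calc ((v * u : (Matrix (Fin 2) (Fin 2) F)ˣ) : Matrix (Fin 2) (Fin 2) F) * c *
      (((v * u)⁻¹ : (Matrix (Fin 2) (Fin 2) F)ˣ) : Matrix (Fin 2) (Fin 2) F)
      = (v : Matrix (Fin 2) (Fin 2) F) * ((u : Matrix (Fin 2) (Fin 2) F) * c *
        ((u⁻¹ : (Matrix (Fin 2) (Fin 2) F)ˣ) : Matrix (Fin 2) (Fin 2) F)) *
        ((v⁻¹ : (Matrix (Fin 2) (Fin 2) F)ˣ) : Matrix (Fin 2) (Fin 2) F) := by
          simp [Units.val_mul, mul_assoc]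
    _ = _ := by rw [h]; simp [Units.val_mul, mul_assoc]

lemma glConn_conj {K : Type} [Field K] [Algebra F K] (q : ℕ) (Δ : F) (sq : K)
    (v : (Matrix (Fin 2) (Fin 2) F)ˣ) {g : (Matrix (Fin 2) (Fin 2) F)ˣ}
    (hmem : g ∈ glConn q Δ sq) : v * g * v⁻¹ ∈ glConn q Δ sq := by
  rcases hmem with ⟨u, hu⟩ | ⟨x, u, hu⟩ | ⟨z, x, y, hz, hnr, hpow, u, hu⟩
  · exact Or.inl ⟨v * u, conj_conj v u hu⟩
  · exact Or.inr (Or.inl ⟨x, v * u, conj_conj v u hu⟩)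
  · exact Or.inr (Or.inr ⟨z, x, y, hz, hnr, hpow, v * u, conj_conj v u hu⟩)

lemma reindex_conj {K : Type} [Field K] [Algebra F K] (q : ℕ) (Δ : F) (sq : K)
    (f : (Matrix (Fin 2) (Fin 2) F)ˣ → ℂ) [Fintype F] (u : (Matrix (Fin 2) (Fin 2) F)ˣ) :
    ∑ g ∈ (glConn q Δ sq).toFinset, f (u⁻¹ * g * u) =
      ∑ g ∈ (glConn q Δ sq).toFinset, f g := by
  apply Finset.sum_nbij' (fun g => u⁻¹ * g * u) (fun g => u * g * u⁻¹)
  · intro g hg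
    rw [Set.mem_toFinset] at hg ⊢
    have := glConn_conj q Δ sq u⁻¹ hg
    rwa [inv_inv] at this
  · intro g hg
    rw [Set.mem_toFinset] at hg ⊢
    exact glConn_conj q Δ sq u hg
  · intro g _; group
  · intro g _; group
  · intro g _; rfl

lemma sum_indPS [Fintype F] {K : Type} [Field K] [Algebra F K] (q : ℕ) (Δ : F) (sq : K)
    (χ₁ χ₂ : Fˣ →* ℂˣ) :
    ∑ g ∈ (glConn q Δ sq).toFinset, indPS χ₁ χ₂ g =
      (({u : (Matrix (Fin 2) (Fin 2) F)ˣ |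
        (u : Matrix (Fin 2) (Fin 2) F) 1 0 = 0}.toFinset.card : ℂ))⁻¹ *
      (Fintype.card (Matrix (Fin 2) (Fin 2) F)ˣ : ℂ) *
      ∑ g ∈ (glConn q Δ sq).toFinset,
        (if (g : Matrix (Fin 2) (Fin 2) F) 1 0 = 0 then
          extHom χ₁ ((g : Matrix (Fin 2) (Fin 2) F) 0 0) *
          extHom χ₂ ((g : Matrix (Fin 2) (Fin 2) F) 1 1) else 0) := by
  set f : (Matrix (Fin 2) (Fin 2) F)ˣ → ℂ := fun h =>
    if (h : Matrix (Fin 2) (Fin 2) F) 1 0 = 0 then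
      extHom χ₁ ((h : Matrix (Fin 2) (Fin 2) F) 0 0) *
      extHom χ₂ ((h : Matrix (Fin 2) (Fin 2) F) 1 1) else 0 with hf
  have h1 : ∀ g, indPS χ₁ χ₂ g =
      (({u : (Matrix (Fin 2) (Fin 2) F)ˣ |
        (u : Matrix (Fin 2) (Fin 2) F) 1 0 = 0}.toFinset.card : ℂ))⁻¹ *
      ∑ u : (Matrix (Fin 2) (Fin 2) F)ˣ, f (u⁻¹ * g * u) := fun g => rfl
  simp only [h1]
  rw [← Finset.mul_sum, Finset.sum_comm, mul_assoc]
  congr 1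
  have h2 : ∀ u : (Matrix (Fin 2) (Fin 2) F)ˣ,
      ∑ g ∈ (glConn q Δ sq).toFinset, f (u⁻¹ * g * u) =
        ∑ g ∈ (glConn q Δ sq).toFinset, f g := fun u => reindex_conj q Δ sq f u
  simp only [h2]
  rw [Finset.sum_const, Finset.card_univ, nsmul_eq_mul]

lemma extHom_coe (χ : Fˣ →* ℂˣ) (x : Fˣ) : extHom χ (x : F) = ((χ x : ℂˣ) : ℂ) := by
  rw [extHom, dif_neg x.ne_zero]
  congr 2
  exact Units.ext rfl

lemma T_eval [Fintype F] {K : Type} [Field K] [Algebra F K] (q : ℕ) (Δ : F)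
    (hΔ : ¬ ∃ m : F, m ^ 2 = Δ) (sq : K) (htwo : (2 : F) ≠ 0) (χ₁ χ₂ : Fˣ →* ℂˣ) :
    ∑ g ∈ (glConn q Δ sq).toFinset,
        (if (g : Matrix (Fin 2) (Fin 2) F) 1 0 = 0 then
          extHom χ₁ ((g : Matrix (Fin 2) (Fin 2) F) 0 0) *
          extHom χ₂ ((g : Matrix (Fin 2) (Fin 2) F) 1 1) else 0)
      = (Fintype.card F : ℂ) * ((χ₂ (-1) : ℂˣ) : ℂ) +
        (Fintype.card F : ℂ) * ((χ₁ (-1) : ℂˣ) : ℂ) +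
        (Fintype.card Fˣ : ℂ) * ∑ x : Fˣ, ((χ₁ x : ℂˣ) : ℂ) * ((χ₂ x : ℂˣ) : ℂ) := by
  have hone : (1 : F) ≠ -1 := by
    intro h
    apply htwo
    linear_combination h
  rw [← Finset.sum_filter]
  have hset : (glConn q Δ sq).toFinset.filter
      (fun g : (Matrix (Fin 2) (Fin 2) F)ˣ => (g : Matrix (Fin 2) (Fin 2) F) 1 0 = 0) =
      ((Finset.univ.image fun b : F => mkUT (1 : Fˣ) (-1 : Fˣ) b) ∪
       (Finset.univ.image fun b : F => mkUT (-1 : Fˣ) (1 : Fˣ) b)) ∪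
      (Finset.univ.image fun p : Fˣ × Fˣ => mkUT p.1 p.1 (p.2 : F)) := by
    ext g
    simp only [Finset.mem_filter, Set.mem_toFinset, Finset.mem_union, Finset.mem_image,
      Finset.mem_univ, true_and]
    constructor
    · rintro ⟨hmem, hg⟩
      have hgeta := Matrix.eta_fin_two ((g : Matrix (Fin 2) (Fin 2) F))
      rw [hg] at hgeta
      rcases (mem_glConn_iff_ut q Δ hΔ sq htwo g hg).1 hmem with ⟨h1, h2⟩ | ⟨h1, h2⟩ | ⟨h1, h2⟩
      · refine Or.inl (Or.inl ⟨(g : Matrix (Fin 2) (Fin 2) F) 0 1, ?_⟩)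
        refine Units.ext ?_
        rw [mkUT_coe]
        conv_rhs => rw [hgeta]
        rw [h1, h2]
        norm_num
      · refine Or.inl (Or.inr ⟨(g : Matrix (Fin 2) (Fin 2) F) 0 1, ?_⟩)
        refine Units.ext ?_
        rw [mkUT_coe]
        conv_rhs => rw [hgeta]
        rw [h1, h2]
        norm_num
      · have hA0 : (g : Matrix (Fin 2) (Fin 2) F) 0 0 ≠ 0 := (ut_entries hg).1
        refine Or.inr ⟨⟨Units.mk0 _ hA0, Units.mk0 _ h2⟩, ?_⟩
        refine Units.ext ?_
        rw [mkUT_coe]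
        conv_rhs => rw [hgeta]
        simp only [Units.val_mk0]
        rw [h1]
    · rintro ((⟨b, rfl⟩ | ⟨b, rfl⟩) | ⟨p, rfl⟩)
      · refine ⟨(mem_glConn_iff_ut q Δ hΔ sq htwo _ (mkUT_10 _ _ _)).2 ?_, mkUT_10 _ _ _⟩
        left
        rw [mkUT_00, mkUT_11]
        norm_num
      · refine ⟨(mem_glConn_iff_ut q Δ hΔ sq htwo _ (mkUT_10 _ _ _)).2 ?_, mkUT_10 _ _ _⟩
        right; left
        rw [mkUT_00, mkUT_11]
        norm_num
      · refine ⟨(mem_glConn_iff_ut q Δ hΔ sq htwo _ (mkUT_10 _ _ _)).2 ?_, mkUT_10 _ _ _⟩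
        right; right
        rw [mkUT_00, mkUT_11, mkUT_01]
        exact ⟨rfl, p.2.ne_zero⟩
  rw [hset]
  have hdisj1 : Disjoint (Finset.univ.image fun b : F => mkUT (1 : Fˣ) (-1 : Fˣ) b)
      (Finset.univ.image fun b : F => mkUT (-1 : Fˣ) (1 : Fˣ) b) := by
    rw [Finset.disjoint_left]
    intro g h1 h2
    rw [Finset.mem_image] at h1 h2
    obtain ⟨b, -, rfl⟩ := h1
    obtain ⟨b', -, hb'⟩ := h2
    have := congrArg (fun w => ((w : (Matrix (Fin 2) (Fin 2) F)ˣ) :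
      Matrix (Fin 2) (Fin 2) F) 0 0) hb'
    simp only [mkUT_00] at this
    exact hone (by simpa using this.symm)
  have hdisj2 : Disjoint ((Finset.univ.image fun b : F => mkUT (1 : Fˣ) (-1 : Fˣ) b) ∪
      (Finset.univ.image fun b : F => mkUT (-1 : Fˣ) (1 : Fˣ) b))
      (Finset.univ.image fun p : Fˣ × Fˣ => mkUT p.1 p.1 (p.2 : F)) := by
    rw [Finset.disjoint_left]
    intro g hg h2
    rw [Finset.mem_image] at h2
    obtain ⟨p, -, rfl⟩ := h2
    simp only [Finset.mem_union, Finset.mem_image, Finset.mem_univ, true_and] at hg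
    rcases hg with ⟨b, hb⟩ | ⟨b, hb⟩ <;>
    · have h00 := congrArg (fun w => ((w : (Matrix (Fin 2) (Fin 2) F)ˣ) :
        Matrix (Fin 2) (Fin 2) F) 0 0) hb
      have h11 := congrArg (fun w => ((w : (Matrix (Fin 2) (Fin 2) F)ˣ) :
        Matrix (Fin 2) (Fin 2) F) 1 1) hb
      simp only [mkUT_00, mkUT_11, Units.val_one, Units.val_neg] at h00 h11
      refine absurd (?_ : (1 : F) = -1) hone
      first
      | exact h00.trans h11.symm
      | exact h11.trans h00.symm
  rw [Finset.sum_union hdisj2, Finset.sum_union hdisj1]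
  have hinj1 : ∀ b ∈ (Finset.univ : Finset F), ∀ b' ∈ Finset.univ,
      mkUT (1 : Fˣ) (-1 : Fˣ) b = mkUT (1 : Fˣ) (-1 : Fˣ) b' → b = b' := by
    intro b _ b' _ h
    have := congrArg (fun w => ((w : (Matrix (Fin 2) (Fin 2) F)ˣ) :
      Matrix (Fin 2) (Fin 2) F) 0 1) h
    simpa using this
  have hinj2 : ∀ b ∈ (Finset.univ : Finset F), ∀ b' ∈ Finset.univ,
      mkUT (-1 : Fˣ) (1 : Fˣ) b = mkUT (-1 : Fˣ) (1 : Fˣ) b' → b = b' := by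
    intro b _ b' _ h
    have := congrArg (fun w => ((w : (Matrix (Fin 2) (Fin 2) F)ˣ) :
      Matrix (Fin 2) (Fin 2) F) 0 1) h
    simpa using this
  have hinj3 : ∀ p ∈ (Finset.univ : Finset (Fˣ × Fˣ)), ∀ p' ∈ Finset.univ,
      mkUT p.1 p.1 (p.2 : F) = mkUT p'.1 p'.1 (p'.2 : F) → p = p' := by
    intro p _ p' _ h
    have h1 := congrArg (fun w => ((w : (Matrix (Fin 2) (Fin 2) F)ˣ) :
      Matrix (Fin 2) (Fin 2) F) 0 0) h
    have h2 := congrArg (fun w => ((w : (Matrix (Fin 2) (Fin 2) F)ˣ) :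
      Matrix (Fin 2) (Fin 2) F) 0 1) h
    simp only [mkUT_00, mkUT_01] at h1 h2
    exact Prod.ext (Units.ext h1) (Units.ext h2)
  rw [Finset.sum_image hinj1, Finset.sum_image hinj2, Finset.sum_image hinj3]
  congr 1
  · congr 1
    · have hval : ∀ b : F,
          extHom χ₁ (((mkUT (1 : Fˣ) (-1 : Fˣ) b : (Matrix (Fin 2) (Fin 2) F)ˣ) :
            Matrix (Fin 2) (Fin 2) F) 0 0) *
          extHom χ₂ (((mkUT (1 : Fˣ) (-1 : Fˣ) b : (Matrix (Fin 2) (Fin 2) F)ˣ) :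
            Matrix (Fin 2) (Fin 2) F) 1 1) = ((χ₂ (-1) : ℂˣ) : ℂ) := by
        intro b
        rw [mkUT_00, mkUT_11, extHom_coe, extHom_coe]
        simp
      rw [Finset.sum_congr rfl (fun b _ => hval b), Finset.sum_const, Finset.card_univ,
        nsmul_eq_mul]
    · have hval : ∀ b : F,
          extHom χ₁ (((mkUT (-1 : Fˣ) (1 : Fˣ) b : (Matrix (Fin 2) (Fin 2) F)ˣ) :
            Matrix (Fin 2) (Fin 2) F) 0 0) *
          extHom χ₂ (((mkUT (-1 : Fˣ) (1 : Fˣ) b : (Matrix (Fin 2) (Fin 2) F)ˣ) :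
            Matrix (Fin 2) (Fin 2) F) 1 1) = ((χ₁ (-1) : ℂˣ) : ℂ) := by
        intro b
        rw [mkUT_00, mkUT_11, extHom_coe, extHom_coe]
        simp
      rw [Finset.sum_congr rfl (fun b _ => hval b), Finset.sum_const, Finset.card_univ,
        nsmul_eq_mul]
  · have hval : ∀ p : Fˣ × Fˣ,
        extHom χ₁ (((mkUT p.1 p.1 (p.2 : F) : (Matrix (Fin 2) (Fin 2) F)ˣ) :
          Matrix (Fin 2) (Fin 2) F) 0 0) *
        extHom χ₂ (((mkUT p.1 p.1 (p.2 : F) : (Matrix (Fin 2) (Fin 2) F)ˣ) :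
          Matrix (Fin 2) (Fin 2) F) 1 1) = ((χ₁ p.1 : ℂˣ) : ℂ) * ((χ₂ p.1 : ℂˣ) : ℂ) := by
      intro p
      rw [mkUT_00, mkUT_11, extHom_coe, extHom_coe]
    rw [Finset.sum_congr rfl (fun p _ => hval p)]
    rw [← Finset.univ_product_univ, Finset.sum_product_right]
    have : ∀ b : Fˣ, ∑ x : Fˣ, ((χ₁ (x, b).1 : ℂˣ) : ℂ) * ((χ₂ (x, b).1 : ℂˣ) : ℂ)
        = ∑ x : Fˣ, ((χ₁ x : ℂˣ) : ℂ) * ((χ₂ x : ℂˣ) : ℂ) := fun b => rfl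
    rw [Finset.sum_congr rfl (fun b _ => this b), Finset.sum_const, Finset.card_univ,
      nsmul_eq_mul]

lemma char_sum [Fintype F] (χ₁ χ₂ : Fˣ →* ℂˣ) :
    (∑ x : Fˣ, ((χ₁ x : ℂˣ) : ℂ) * ((χ₂ x : ℂˣ) : ℂ))
      = if χ₂ = χ₁⁻¹ then (Fintype.card Fˣ : ℂ) else 0 := by
  by_cases h : χ₂ = χ₁⁻¹
  · rw [if_pos h, h]
    have : ∀ x : Fˣ, ((χ₁ x : ℂˣ) : ℂ) * (((χ₁⁻¹ : Fˣ →* ℂˣ) x : ℂˣ) : ℂ) = 1 := by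
      intro x
      rw [MonoidHom.inv_apply, ← Units.val_mul, mul_inv_cancel, Units.val_one]
    rw [Finset.sum_congr rfl (fun x _ => this x), Finset.sum_const, Finset.card_univ,
      nsmul_eq_mul, mul_one]
  · rw [if_neg h]
    set ψ : Fˣ →* ℂ := (Units.coeHom ℂ).comp (χ₁ * χ₂) with hψ
    have hne : ψ ≠ 1 := by
      intro he
      apply h
      ext x
      have := congrArg (fun f : Fˣ →* ℂ => f x) he
      simp only [hψ, MonoidHom.comp_apply, MonoidHom.mul_apply, Units.coeHom_apply,
        MonoidHom.one_apply] at this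
      have hu : χ₁ x * χ₂ x = 1 := Units.ext (by simpa using this)
      rw [MonoidHom.inv_apply]
      exact (eq_inv_of_mul_eq_one_right (by rw [mul_comm] at hu; exact hu)).symm ▸ rfl
    have hz := sum_hom_units_eq_zero ψ hne
    rw [← hz]
    apply Finset.sum_congr rfl
    intro x _
    simp [hψ]


/-- the eigenvalues of `Cay(GL(2,q), 𝔖)` indexed by the principal series
characters `I[χ₁,χ₂]`. -/
theorem stmt_12 (q p n : ℕ) (hp : p.Prime) (hq : q = p ^ n) (hn : n ≠ 0) (hodd : Odd q)
    (F K : Type) [Field F] [Field K] [Fintype F] [Fintype K] [Algebra F K]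
    (hF : Fintype.card F = q) (hK : Fintype.card K = q ^ 2)
    (Δ : F) (hΔ : ¬ ∃ m : F, m ^ 2 = Δ) (sq : K) (hsq : sq ^ 2 = algebraMap F K Δ)
    (χ₁ χ₂ : Fˣ →* ℂˣ) (hχ : χ₁ ≠ χ₂) :
    ∀ θ : ℂ,
      θ = (1 / ((q : ℂ) + 1)) * ∑ g ∈ (glConn q Δ sq).toFinset, indPS χ₁ χ₂ g →
      ((χ₂ = χ₁⁻¹ →
        θ = (q : ℂ) * (((χ₁ (-1) : ℂˣ) : ℂ) + ((χ₂ (-1) : ℂˣ) : ℂ)) + ((q : ℂ) - 1) ^ 2) ∧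
      (χ₂ ≠ χ₁⁻¹ →
        θ = (q : ℂ) * (((χ₁ (-1) : ℂˣ) : ℂ) + ((χ₂ (-1) : ℂˣ) : ℂ))) ∧
      (χ₁ (-1) * χ₂ (-1) = 1 → ∃ m : ℤ, θ = (m : ℂ) ∧ m % 4 = 2) ∧
      (χ₁ (-1) * χ₂ (-1) = -1 → ∃ m : ℤ, θ = (m : ℂ) ∧ m % 4 = 0)) := by
  intro θ hθ
  have hq2 : 2 ≤ q := by rw [← hF]; exact Fintype.one_lt_card
  have hrc : ringChar F ≠ 2 := by
    intro h
    have h2 := FiniteField.even_card_iff_char_two.1 h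
    have h3 := Nat.odd_iff.1 hodd
    rw [hF] at h2
    omega
  have htwo : (2 : F) ≠ 0 := by
    intro h
    haveI := ringChar.charP F
    have hdvd : ringChar F ∣ 2 := (CharP.cast_eq_zero_iff F (ringChar F) 2).1 (by exact_mod_cast h)
    have h1 := CharP.char_ne_one F (ringChar F)
    rcases (Nat.dvd_prime Nat.prime_two).1 hdvd with h' | h'
    · exact h1 h'
    · exact hrc h'
  have hε : ∀ χ : Fˣ →* ℂˣ, ((χ (-1) : ℂˣ) : ℂ) = 1 ∨ ((χ (-1) : ℂˣ) : ℂ) = -1 := by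
    intro χ
    have hsq1 : (χ (-1)) ^ 2 = 1 := by
      rw [← map_pow]
      norm_num
    have hval : ((χ (-1) : ℂˣ) : ℂ) ^ 2 = 1 := by
      rw [← Units.val_pow_eq_pow_val, hsq1, Units.val_one]
    have h3 : (((χ (-1) : ℂˣ) : ℂ) - 1) * (((χ (-1) : ℂˣ) : ℂ) + 1) = 0 := by
      linear_combination hval
    rcases mul_eq_zero.1 h3 with h | h
    · exact Or.inl (sub_eq_zero.1 h)
    · exact Or.inr (eq_neg_of_add_eq_zero_left h)
  have hT := T_eval (K := K) q Δ hΔ sq htwo χ₁ χ₂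
  rw [char_sum] at hT
  have hq1 : ((q : ℂ) + 1) ≠ 0 := by
    have : ((q + 1 : ℕ) : ℂ) ≠ 0 := Nat.cast_ne_zero.2 (Nat.succ_ne_zero q)
    push_cast at this
    exact this
  have hq0 : ((q : ℂ)) ≠ 0 := Nat.cast_ne_zero.2 (by omega)
  have hqm1 : ((q : ℂ) - 1) ≠ 0 := by
    have : ((q - 1 : ℕ) : ℂ) ≠ 0 := Nat.cast_ne_zero.2 (by omega)
    rwa [Nat.cast_sub (by omega : 1 ≤ q), Nat.cast_one] at this
  have hmaster : θ = (q : ℂ) * (((χ₁ (-1) : ℂˣ) : ℂ) + ((χ₂ (-1) : ℂˣ) : ℂ)) +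
      (if χ₂ = χ₁⁻¹ then ((q : ℂ) - 1) ^ 2 else 0) := by
    rw [hθ, sum_indPS, hT, card_ut, card_gl_eq q hF (by omega), hF, Fintype.card_units, hF]
    by_cases hinv : χ₂ = χ₁⁻¹
    · rw [if_pos hinv, if_pos hinv]
      push_cast [Nat.cast_sub (by omega : 1 ≤ q)]
      field_simp
      ring
    · rw [if_neg hinv, if_neg hinv]
      push_cast [Nat.cast_sub (by omega : 1 ≤ q)]
      field_simp
      ring
  obtain ⟨k, hk⟩ := hodd
  refine ⟨?_, ?_, ?_, ?_⟩
  · intro hinv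
    rw [hmaster, if_pos hinv]
  · intro hinv
    rw [hmaster, if_neg hinv, add_zero]
  · intro hpp
    have hppC : ((χ₁ (-1) : ℂˣ) : ℂ) * ((χ₂ (-1) : ℂˣ) : ℂ) = 1 := by
      rw [← Units.val_mul, hpp, Units.val_one]
    rcases hε χ₁ with h1 | h1 <;> rcases hε χ₂ with h2 | h2
    · by_cases hinv : χ₂ = χ₁⁻¹
      · refine ⟨4 * ((k : ℤ) * k + k) + 2, ?_, ?_⟩
        · rw [hmaster, if_pos hinv, h1, h2, hk]; push_cast; ring
        · set J := (k : ℤ) * k with hJ; omega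
      · refine ⟨4 * (k : ℤ) + 2, ?_, by omega⟩
        rw [hmaster, if_neg hinv, h1, h2, hk]; push_cast; ring
    · rw [h1, h2] at hppC; norm_num at hppC
    · rw [h1, h2] at hppC; norm_num at hppC
    · by_cases hinv : χ₂ = χ₁⁻¹
      · refine ⟨4 * ((k : ℤ) * k - k) - 2, ?_, ?_⟩
        · rw [hmaster, if_pos hinv, h1, h2, hk]; push_cast; ring
        · set J := (k : ℤ) * k with hJ; omega
      · refine ⟨4 * (-(k : ℤ)) - 2, ?_, by omega⟩
        rw [hmaster, if_neg hinv, h1, h2, hk]; push_cast; ring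
  · intro hpp
    have hppC : ((χ₁ (-1) : ℂˣ) : ℂ) * ((χ₂ (-1) : ℂˣ) : ℂ) = -1 := by
      rw [← Units.val_mul, hpp, Units.val_neg, Units.val_one]
    rcases hε χ₁ with h1 | h1 <;> rcases hε χ₂ with h2 | h2
    · rw [h1, h2] at hppC; norm_num at hppC
    · by_cases hinv : χ₂ = χ₁⁻¹
      · refine ⟨4 * ((k : ℤ) * k), ?_, ?_⟩
        · rw [hmaster, if_pos hinv, h1, h2, hk]; push_cast; ring
        · set J := (k : ℤ) * k with hJ; omega
      · refine ⟨0, ?_, by omega⟩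
        rw [hmaster, if_neg hinv, h1, h2]; push_cast; ring
    · by_cases hinv : χ₂ = χ₁⁻¹
      · refine ⟨4 * ((k : ℤ) * k), ?_, ?_⟩
        · rw [hmaster, if_pos hinv, h1, h2, hk]; push_cast; ring
        · set J := (k : ℤ) * k with hJ; omega
      · refine ⟨0, ?_, by omega⟩
        rw [hmaster, if_neg hinv, h1, h2]; push_cast; ring
    · rw [h1, h2] at hppC; norm_num at hppC
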